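/- arXiv:2308.07667 — 6 statements merged into one kernel-verified Lean document; each statement's English description precedes it below -/
import Mathlib

section
/- For every finite simple graph G, every minimal dominating set of G is a maximal irredundant set of G. -/
open Finset

variable {V : Type*}

/-- Closed neighborhood N[v]. -/
def closedNbhd (G : SimpleGraph V) (v : V) : Set V := insert v (G.neighborSet v)

/-- S is a dominating set. -/
def IsDomSet (G : SimpleGraph V) (S : Finset V) : Prop :=
  ∀ v : V, v ∈ S ∨ ∃ u ∈ S, G.Adj u v

/-- S is an independent (stable) set. -/
def IsIndepSet (G : SimpleGraph V) (S : Finset V) : Prop :=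
  ∀ u ∈ S, ∀ v ∈ S, ¬ G.Adj u v

/-- S is irredundant: every vertex of S has a private neighbor. -/
def IsIrredSet (G : SimpleGraph V) (S : Finset V) : Prop :=
  ∀ v ∈ S, ∃ w, w ∈ closedNbhd G v ∧ ∀ u ∈ S, u ≠ v → w ∉ closedNbhd G u

/-- S is open irredundant: every vertex of S has a private neighbor outside S. -/
def IsOpenIrredSet (G : SimpleGraph V) (S : Finset V) : Prop :=
  ∀ v ∈ S, ∃ w, w ∉ S ∧ w ∈ closedNbhd G v ∧ ∀ u ∈ S, u ≠ v → w ∉ closedNbhd G u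

/-- S is a maximal independent set. -/
def MaxIndepSet (G : SimpleGraph V) (S : Finset V) : Prop :=
  IsIndepSet G S ∧ ∀ T : Finset V, IsIndepSet G T → S ⊆ T → T = S

/-- S is a minimal dominating set. -/
def MinDomSet (G : SimpleGraph V) (S : Finset V) : Prop :=
  IsDomSet G S ∧ ∀ T : Finset V, T ⊆ S → IsDomSet G T → T = S

/-- S is a maximal irredundant set. -/
def MaxIrredSet (G : SimpleGraph V) (S : Finset V) : Prop :=
  IsIrredSet G S ∧ ∀ T : Finset V, IsIrredSet G T → S ⊆ T → T = S

/-- Domination number γ(G). -/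
noncomputable def gammaNum (G : SimpleGraph V) [Fintype V] : ℕ :=
  sInf {k | ∃ S : Finset V, IsDomSet G S ∧ S.card = k}

/-- Lower irredundance number ir(G). -/
noncomputable def irNum (G : SimpleGraph V) [Fintype V] : ℕ :=
  sInf {k | ∃ S : Finset V, MaxIrredSet G S ∧ S.card = k}

/-- Independent domination number i(G). -/
noncomputable def iNum (G : SimpleGraph V) [Fintype V] : ℕ :=
  sInf {k | ∃ S : Finset V, MaxIndepSet G S ∧ S.card = k}

/-- Independence number α(G). -/
noncomputable def alphaNum (G : SimpleGraph V) [Fintype V] : ℕ :=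
  sSup {k | ∃ S : Finset V, IsIndepSet G S ∧ S.card = k}

/-- Upper domination number Γ(G). -/
noncomputable def upperGammaNum (G : SimpleGraph V) [Fintype V] : ℕ :=
  sSup {k | ∃ S : Finset V, MinDomSet G S ∧ S.card = k}

/-- Upper irredundance number IR(G). -/
noncomputable def IRNum (G : SimpleGraph V) [Fintype V] : ℕ :=
  sSup {k | ∃ S : Finset V, IsIrredSet G S ∧ S.card = k}

/-- Open irredundance number OIR(G). -/
noncomputable def OIRNum (G : SimpleGraph V) [Fintype V] : ℕ :=
  sSup {k | ∃ S : Finset V, IsOpenIrredSet G S ∧ S.card = k}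

/-- IS(v): maximum size of an independent set containing v. -/
noncomputable def ISv (G : SimpleGraph V) [Fintype V] (v : V) : ℕ :=
  sSup {k | ∃ S : Finset V, IsIndepSet G S ∧ v ∈ S ∧ S.card = k}

/-- IRS(v): maximum size of an irredundant set containing v. -/
noncomputable def IRSv (G : SimpleGraph V) [Fintype V] (v : V) : ℕ :=
  sSup {k | ∃ S : Finset V, IsIrredSet G S ∧ v ∈ S ∧ S.card = k}

/-- Independence saturation number IS(G). -/
noncomputable def ISNum (G : SimpleGraph V) [Fintype V] : ℕ := ⨅ v : V, ISv G v

/-- Irredundance saturation number IRS(G). -/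
noncomputable def IRSNum (G : SimpleGraph V) [Fintype V] : ℕ := ⨅ v : V, IRSv G v

theorem minDom_is_maxIrred [Fintype V] (G : SimpleGraph V) (S : Finset V)
    (hS : MinDomSet G S) : MaxIrredSet G S := by
  classical
  obtain ⟨hdom, hmin⟩ := hS
  constructor
  · -- irredundant
    intro v hv
    by_contra hno
    push_neg at hno
    -- then S \ {v} dominates
    have hdom' : IsDomSet G (S.erase v) := by
      intro w
      rcases hdom w with hw | ⟨u, hu, huw⟩
      · by_cases hwv : w = v
        · subst hwv
          obtain ⟨u, hu, hune, hmem⟩ := hno w (by simp [closedNbhd])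
          rcases hmem with rfl | hadj
          · exact absurd rfl hune
          · exact Or.inr ⟨u, Finset.mem_erase.mpr ⟨hune, hu⟩, hadj⟩
        · exact Or.inl (Finset.mem_erase.mpr ⟨hwv, hw⟩)
      · by_cases huv : u = v
        · subst huv
          -- w ∈ N[v] (as neighbor); w not private, so some other u' covers it
          obtain ⟨u', hu', hune, hmem⟩ := hno w (by simp [closedNbhd, huw])
          rcases hmem with rfl | hadj
          · exact Or.inl (Finset.mem_erase.mpr ⟨hune, hu'⟩)
          · exact Or.inr ⟨u', Finset.mem_erase.mpr ⟨hune, hu'⟩, hadj⟩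
        · exact Or.inr ⟨u, Finset.mem_erase.mpr ⟨huv, hu⟩, huw⟩
    have := hmin (S.erase v) (Finset.erase_subset _ _) hdom'
    exact absurd (this ▸ Finset.mem_erase.mp (this.symm ▸ hv)).1 (by simp)
  · -- maximal
    intro T hT hST
    apply Finset.Subset.antisymm _ hST
    intro x hx
    by_contra hxS
    obtain ⟨w, hwN, hwpriv⟩ := hT x hx
    rcases hdom w with hw | ⟨u, hu, huw⟩
    · exact hwpriv w (hST hw) (fun h => hxS (h ▸ hw))
        (by simp [closedNbhd])
    · exact hwpriv u (hST hu) (fun h => hxS (h ▸ hu))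
        (by simp [closedNbhd, huw])
end

section
/- For every finite simple graph G with at least one vertex, γ(G) ≤ 2·ir(G) − 1, where γ is the domination number and ir is the lower irredundance number. -/
open Finset

variable {V : Type*}

lemma closed_comm {G : SimpleGraph V} {u v : V} :
    u ∈ closedNbhd G v ↔ v ∈ closedNbhd G u := by
  unfold closedNbhd
  simp only [Set.mem_insert_iff, SimpleGraph.mem_neighborSet]
  constructor
  · rintro (rfl | h)
    · exact Or.inl rfl
    · exact Or.inr h.symm
  · rintro (rfl | h)
    · exact Or.inl rfl
    · exact Or.inr h.symm

lemma self_mem_closed {G : SimpleGraph V} (v : V) : v ∈ closedNbhd G v :=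
  Set.mem_insert _ _

lemma annih [DecidableEq V] {G : SimpleGraph V} {X : Finset V} {z : V} (hz : z ∉ X)
    (h : ¬ IsIrredSet G (insert z X)) :
    (∃ x ∈ X, ∀ w, w ∈ closedNbhd G x →
        (∀ u ∈ X, u ≠ x → w ∉ closedNbhd G u) → w ∈ closedNbhd G z)
    ∨ (∀ w, w ∈ closedNbhd G z → ∃ u ∈ X, w ∈ closedNbhd G u) := by
  unfold IsIrredSet at h
  push_neg at h
  obtain ⟨v, hv, hv2⟩ := h
  rcases Finset.mem_insert.1 hv with rfl | hvX
  · -- v = z : right case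
    right
    intro w hw
    obtain ⟨u, hu, hune, hwu⟩ := hv2 w hw
    rcases Finset.mem_insert.1 hu with rfl | huX
    · exact absurd rfl hune
    · exact ⟨u, huX, hwu⟩
  · -- v ∈ X : left case
    left
    refine ⟨v, hvX, fun w hw hpriv => ?_⟩
    obtain ⟨u, hu, hune, hwu⟩ := hv2 w hw
    rcases Finset.mem_insert.1 hu with rfl | huX
    · exact hwu
    · exact absurd hwu (hpriv u huX hune)

lemma dom_of_closed {G : SimpleGraph V} {D : Finset V}
    (h : ∀ v, ∃ d ∈ D, v ∈ closedNbhd G d) : IsDomSet G D := by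
  intro v
  obtain ⟨d, hd, hv⟩ := h v
  rcases Set.mem_insert_iff.1 hv with rfl | hadj
  · exact Or.inl hd
  · exact Or.inr ⟨d, hd, SimpleGraph.mem_neighborSet _ _ _ |>.1 hadj⟩

lemma key_dom {G : SimpleGraph V} [Fintype V] {X : Finset V}
    (hX : MaxIrredSet G X) (hne : X.Nonempty) :
    ∃ D : Finset V, IsDomSet G D ∧ D.card ≤ 2 * X.card - 1 := by
  classical
  obtain ⟨hirr, hmax⟩ := hX
  have hcardpos : 1 ≤ X.card := Finset.card_pos.2 hne
  have hnotirr : ∀ z ∉ X, ¬ IsIrredSet G (insert z X) := by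
    intro z hz h
    have := hmax _ h (Finset.subset_insert _ _)
    exact hz (this ▸ Finset.mem_insert_self z X)
  by_cases hdom : ∀ v : V, ∃ x ∈ X, v ∈ closedNbhd G x
  · exact ⟨X, dom_of_closed hdom, by omega⟩
  · push_neg at hdom
    obtain ⟨u0, hu0⟩ := hdom
    have hu0X : u0 ∉ X := fun h => hu0 u0 h (self_mem_closed u0)
    -- choice of private neighbors
    have hch : ∀ y : V, ∃ w, y ∈ X →
        (w ∈ closedNbhd G y ∧ ∀ u ∈ X, u ≠ y → w ∉ closedNbhd G u) := by
      intro y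
      by_cases hy : y ∈ X
      · obtain ⟨w, hw⟩ := hirr y hy
        exact ⟨w, fun _ => hw⟩
      · exact ⟨y, fun h => absurd h hy⟩
    choose f hf using hch
    -- u0 annihilates some x0
    have hann0 := annih hu0X (hnotirr u0 hu0X)
    rcases hann0 with ⟨x0, hx0X, hx0ann⟩ | hright
    · -- find y0 ∈ X, y0 ≠ x0, with x0 ∈ N[y0]
      have hy0 : ∃ y ∈ X, y ≠ x0 ∧ x0 ∈ closedNbhd G y := by
        by_contra hcon
        push_neg at hcon
        have hx0priv : ∀ u ∈ X, u ≠ x0 → x0 ∉ closedNbhd G u := by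
          intro u hu hune
          exact hcon u hu hune
        have := hx0ann x0 (self_mem_closed x0) hx0priv
        exact hu0 x0 hx0X (closed_comm.1 this)
      obtain ⟨y0, hy0X, hy0ne, hy0mem⟩ := hy0
      refine ⟨(X.erase x0) ∪ X.image f, ?_, ?_⟩
      · apply dom_of_closed
        intro z
        by_cases h1 : ∃ y ∈ X, y ≠ x0 ∧ z ∈ closedNbhd G y
        · obtain ⟨y, hyX, hyne, hzy⟩ := h1
          exact ⟨y, Finset.mem_union_left _ (Finset.mem_erase.2 ⟨hyne, hyX⟩), hzy⟩
        · by_cases h2 : ∃ y ∈ X, z ∈ closedNbhd G (f y)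
          · obtain ⟨y, hyX, hz⟩ := h2
            exact ⟨f y, Finset.mem_union_right _ (Finset.mem_image_of_mem f hyX), hz⟩
          · exfalso
            push_neg at h1 h2
            have hzX : z ∉ X := by
              intro hzX
              by_cases hz0 : z = x0
              · subst hz0
                exact h1 y0 hy0X hy0ne hy0mem
              · exact h1 z hzX hz0 (self_mem_closed z)
            rcases annih hzX (hnotirr z hzX) with ⟨x, hxX, hannz⟩ | hrightz
            · have := hannz (f x) (hf x hxX).1 (hf x hxX).2
              exact h2 x hxX (closed_comm.1 this)
            · by_cases hzx0 : z ∈ closedNbhd G x0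
              · have hzu0 : z ∈ closedNbhd G u0 :=
                  hx0ann z hzx0 (fun u hu hune => h1 u hu hune)
                obtain ⟨u, huX, hu⟩ := hrightz u0 (closed_comm.1 hzu0)
                exact hu0 u huX hu
              · obtain ⟨u, huX, hu⟩ := hrightz z (self_mem_closed z)
                by_cases hux : u = x0
                · exact hzx0 (hux ▸ hu)
                · exact h1 u huX hux hu
      · calc ((X.erase x0) ∪ X.image f).card
            ≤ (X.erase x0).card + (X.image f).card := Finset.card_union_le _ _
          _ ≤ (X.card - 1) + X.card := by
              rw [Finset.card_erase_of_mem hx0X]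
              exact Nat.add_le_add_left (Finset.card_image_le) _
          _ ≤ 2 * X.card - 1 := by omega
    · -- right case impossible: u0 ∈ N[u0] would give u0 dominated
      obtain ⟨u, huX, hu⟩ := hright u0 (self_mem_closed u0)
      exact absurd hu (hu0 u huX)

lemma exists_maxIrred (G : SimpleGraph V) [Fintype V] :
    ∃ X : Finset V, MaxIrredSet G X := by
  classical
  obtain ⟨X, hXmem, hXmax⟩ :=
    Finset.exists_max_image (Finset.univ.filter (fun S => IsIrredSet G S)) Finset.card
      ⟨∅, Finset.mem_filter.2 ⟨Finset.mem_univ _, by simp [IsIrredSet]⟩⟩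
  refine ⟨X, (Finset.mem_filter.1 hXmem).2, fun T hT hsub => ?_⟩
  exact (Finset.eq_of_subset_of_card_le hsub
    (hXmax T (Finset.mem_filter.2 ⟨Finset.mem_univ T, hT⟩))).symm

theorem gamma_le_two_ir_sub_one [Fintype V] [Nonempty V] (G : SimpleGraph V) :
    gammaNum G ≤ 2 * irNum G - 1 := by
  classical
  obtain ⟨X0, hX0⟩ := exists_maxIrred G
  have hne : {k | ∃ S : Finset V, MaxIrredSet G S ∧ S.card = k}.Nonempty :=
    ⟨X0.card, X0, hX0, rfl⟩
  obtain ⟨S, hS, hScard⟩ := Nat.sInf_mem hne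
  have hSne : S.Nonempty := by
    rw [Finset.nonempty_iff_ne_empty]
    intro hempty
    obtain ⟨v⟩ := ‹Nonempty V›
    have hsing : IsIrredSet G {v} := by
      intro x hx
      refine ⟨x, self_mem_closed x, fun u hu hune => ?_⟩
      rw [Finset.mem_singleton] at hx hu
      exact absurd (hu.trans hx.symm) hune
    have := hS.2 {v} hsing (by rw [hempty]; exact Finset.empty_subset _)
    simp [hempty] at this
  obtain ⟨D, hdom, hle⟩ := key_dom hS hSne
  calc gammaNum G ≤ D.card := Nat.sInf_le ⟨D, hdom, rfl⟩
    _ ≤ 2 * S.card - 1 := hle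
    _ = 2 * irNum G - 1 := by rw [hScard]; rfl
end

section
/- Let CK_n be the graph obtained by taking two disjoint copies of K_n and adding a perfect matching between them. Then the upper domination number Γ(CK_n) equals n. -/
open Finset

variable {V : Type*}

/-- CK_n: two disjoint copies of K_n joined by a perfect matching (a_i = inl i, b_i = inr i). -/
def CK (n : ℕ) : SimpleGraph (Fin n ⊕ Fin n) :=
  SimpleGraph.fromRel (fun x y => match x, y with
    | .inl _, .inl _ => True
    | .inr _, .inr _ => True
    | .inl i, .inr j => i = j
    | _, _ => False)


lemma mem_closedNbhd {G : SimpleGraph V} {v w : V} :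
    w ∈ closedNbhd G v ↔ w = v ∨ G.Adj v w := by
  simp [closedNbhd]

lemma ck_adj_ll {n : ℕ} {i j : Fin n} : (CK n).Adj (.inl i) (.inl j) ↔ i ≠ j := by
  simp [CK, SimpleGraph.fromRel_adj]

lemma ck_adj_rr {n : ℕ} {i j : Fin n} : (CK n).Adj (.inr i) (.inr j) ↔ i ≠ j := by
  simp [CK, SimpleGraph.fromRel_adj]

lemma ck_adj_lr {n : ℕ} {i j : Fin n} : (CK n).Adj (.inl i) (.inr j) ↔ i = j := by
  constructor
  · rintro ⟨-, h | h⟩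
    · exact h
    · exact h.elim
  · rintro rfl
    exact ⟨by simp, Or.inl rfl⟩

lemma ck_adj_rl {n : ℕ} {i j : Fin n} : (CK n).Adj (.inr i) (.inl j) ↔ i = j := by
  rw [(CK n).adj_comm, ck_adj_lr, eq_comm]

lemma min_dom_private {G : SimpleGraph V} [DecidableEq V] {S : Finset V}
    (h : MinDomSet G S) :
    ∀ v ∈ S, ∃ w, w ∈ closedNbhd G v ∧ ∀ u ∈ S, u ≠ v → w ∉ closedNbhd G u := by
  intro v hv
  have hT : ¬ IsDomSet G (S.erase v) := by
    intro hd
    have heq := h.2 _ (Finset.erase_subset _ _) hd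
    have hv' : v ∈ S.erase v := by rw [heq]; exact hv
    simp at hv'
  rw [IsDomSet] at hT
  push_neg at hT
  obtain ⟨w, hw1, hw2⟩ := hT
  refine ⟨w, ?_, ?_⟩
  · rcases h.1 w with hw | ⟨u, hu, hadj⟩
    · have : w = v := by
        by_contra hne
        exact hw1 (Finset.mem_erase.2 ⟨hne, hw⟩)
      exact mem_closedNbhd.2 (Or.inl this)
    · have : u = v := by
        by_contra hne
        exact hw2 u (Finset.mem_erase.2 ⟨hne, hu⟩) hadj
      subst this
      exact mem_closedNbhd.2 (Or.inr hadj)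
  · intro u hu hune hmem
    rcases mem_closedNbhd.1 hmem with rfl | hadj
    · exact hw1 (Finset.mem_erase.2 ⟨hune, hu⟩)
    · exact hw2 u (Finset.mem_erase.2 ⟨hune, hu⟩) hadj

lemma ck_no_mix_l {n : ℕ} {S : Finset (Fin n ⊕ Fin n)} (h : MinDomSet (CK n) S)
    {i i' j : Fin n} (hi : Sum.inl i ∈ S) (hi' : Sum.inl i' ∈ S) (hne : i ≠ i')
    (hj : Sum.inr j ∈ S) : False := by
  obtain ⟨w, hw1, hw2⟩ := min_dom_private h _ hi
  have hA : w ∉ closedNbhd (CK n) (Sum.inl i') :=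
    hw2 (Sum.inl i') hi' (by simp [hne.symm])
  rcases w with k | k
  · apply hA
    rw [mem_closedNbhd]
    by_cases hk : k = i'
    · exact Or.inl (by rw [hk])
    · exact Or.inr (ck_adj_ll.2 (fun hh => hk hh.symm))
  · have hk : k = i := by
      rcases mem_closedNbhd.1 hw1 with hh | hh
      · exact absurd hh (by simp)
      · exact (ck_adj_lr.1 hh).symm
    subst hk
    apply hw2 (Sum.inr j) hj (by simp)
    rw [mem_closedNbhd]
    by_cases hkj : k = j
    · exact Or.inl (by rw [hkj])
    · exact Or.inr (ck_adj_rr.2 (fun hh => hkj hh.symm))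

lemma ck_no_mix_r {n : ℕ} {S : Finset (Fin n ⊕ Fin n)} (h : MinDomSet (CK n) S)
    {i i' j : Fin n} (hi : Sum.inr i ∈ S) (hi' : Sum.inr i' ∈ S) (hne : i ≠ i')
    (hj : Sum.inl j ∈ S) : False := by
  obtain ⟨w, hw1, hw2⟩ := min_dom_private h _ hi
  have hA : w ∉ closedNbhd (CK n) (Sum.inr i') :=
    hw2 (Sum.inr i') hi' (by simp [hne.symm])
  rcases w with k | k
  · have hk : k = i := by
      rcases mem_closedNbhd.1 hw1 with hh | hh
      · exact absurd hh (by simp)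
      · exact (ck_adj_rl.1 hh).symm
    subst hk
    apply hw2 (Sum.inl j) hj (by simp)
    rw [mem_closedNbhd]
    by_cases hkj : k = j
    · exact Or.inl (by rw [hkj])
    · exact Or.inr (ck_adj_ll.2 (fun hh => hkj hh.symm))
  · apply hA
    rw [mem_closedNbhd]
    by_cases hk : k = i'
    · exact Or.inl (by rw [hk])
    · exact Or.inr (ck_adj_rr.2 (fun hh => hk hh.symm))

lemma ck_min_dom_card_le {n : ℕ} {S : Finset (Fin n ⊕ Fin n)}
    (h : MinDomSet (CK n) S) : S.card ≤ n := by
  classical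
  set SA := S.filter (fun x => x.isLeft) with hSA
  set SB := S.filter (fun x => ¬ x.isLeft) with hSB
  have hsplit : SA.card + SB.card = S.card :=
    Finset.card_filter_add_card_filter_not _
  have hAsub : SA ⊆ (univ : Finset (Fin n)).image Sum.inl := by
    intro x hx
    rcases Finset.mem_filter.1 hx with ⟨-, hL⟩
    rcases x with k | k
    · simp
    · simp at hL
  have hBsub : SB ⊆ (univ : Finset (Fin n)).image Sum.inr := by
    intro x hx
    rcases Finset.mem_filter.1 hx with ⟨-, hL⟩
    rcases x with k | k
    · simp at hL
    · simp
  have hAle : SA.card ≤ n := by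
    calc SA.card ≤ _ := Finset.card_le_card hAsub
      _ = n := by
          rw [Finset.card_image_of_injective _ Sum.inl_injective, card_univ,
            Fintype.card_fin]
  have hBle : SB.card ≤ n := by
    calc SB.card ≤ _ := Finset.card_le_card hBsub
      _ = n := by
          rw [Finset.card_image_of_injective _ Sum.inr_injective, card_univ,
            Fintype.card_fin]
  have memA : ∀ x ∈ SA, ∃ i : Fin n, x = Sum.inl i := by
    intro x hx
    rcases Finset.mem_filter.1 hx with ⟨-, hL⟩
    rcases x with k | k
    · exact ⟨k, rfl⟩
    · simp at hL
  have memB : ∀ x ∈ SB, ∃ i : Fin n, x = Sum.inr i := by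
    intro x hx
    rcases Finset.mem_filter.1 hx with ⟨-, hL⟩
    rcases x with k | k
    · simp at hL
    · exact ⟨k, rfl⟩
  by_cases hA2 : 2 ≤ SA.card
  · have hBempty : SB = ∅ := by
      rw [Finset.eq_empty_iff_forall_notMem]
      intro x hx
      obtain ⟨j, rfl⟩ := memB x hx
      obtain ⟨a, ha, b, hb, hab⟩ := Finset.one_lt_card.1 hA2
      obtain ⟨i, rfl⟩ := memA a ha
      obtain ⟨i', rfl⟩ := memA b hb
      have hii' : i ≠ i' := fun hh => hab (by rw [hh])
      exact ck_no_mix_l h (Finset.mem_filter.1 ha).1 (Finset.mem_filter.1 hb).1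
        hii' (Finset.mem_filter.1 hx).1
    rw [hBempty] at hsplit
    simp at hsplit
    omega
  · by_cases hB2 : 2 ≤ SB.card
    · have hAempty : SA = ∅ := by
        rw [Finset.eq_empty_iff_forall_notMem]
        intro x hx
        obtain ⟨j, rfl⟩ := memA x hx
        obtain ⟨a, ha, b, hb, hab⟩ := Finset.one_lt_card.1 hB2
        obtain ⟨i, rfl⟩ := memB a ha
        obtain ⟨i', rfl⟩ := memB b hb
        have hii' : i ≠ i' := fun hh => hab (by rw [hh])
        exact ck_no_mix_r h (Finset.mem_filter.1 ha).1 (Finset.mem_filter.1 hb).1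
          hii' (Finset.mem_filter.1 hx).1
      rw [hAempty] at hsplit
      simp at hsplit
      omega
    · -- SA.card ≤ 1 and SB.card ≤ 1
      by_cases h0 : n = 0
      · subst h0
        simpa using Finset.card_le_univ S
      by_cases h1 : n = 1
      case neg => omega
      subst h1
      by_contra hgt
      have hcard : S.card = 2 := by omega
      have hA1 : SA.card = 1 := by omega
      obtain ⟨x, hx⟩ := Finset.card_pos.1 (by omega : 0 < SA.card)
      obtain ⟨i, rfl⟩ := memA x hx
      have hiS : Sum.inl i ∈ S := (Finset.mem_filter.1 hx).1
      have hdom : IsDomSet (CK 1) {Sum.inl i} := by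
        intro v
        rcases v with k | k
        · left
          have : k = i := Subsingleton.elim _ _
          simp [this]
        · right
          refine ⟨Sum.inl i, Finset.mem_singleton_self _, ?_⟩
          have : i = k := Subsingleton.elim _ _
          exact ck_adj_lr.2 this
      have heq := h.2 _ (Finset.singleton_subset_iff.2 hiS) hdom
      have : (1 : ℕ) = 2 := by
        rw [← Finset.card_singleton (Sum.inl i), heq, hcard]
      omega

lemma ck_min_dom_exists (n : ℕ) :
    MinDomSet (CK n) (((univ : Finset (Fin n)).image Sum.inl : Finset (Fin n ⊕ Fin n))) ∧
      (((univ : Finset (Fin n)).image Sum.inl : Finset (Fin n ⊕ Fin n))).card = n := by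
  refine ⟨⟨?_, ?_⟩, ?_⟩
  · intro v
    rcases v with i | i
    · exact Or.inl (Finset.mem_image.2 ⟨i, Finset.mem_univ i, rfl⟩)
    · exact Or.inr ⟨Sum.inl i, Finset.mem_image.2 ⟨i, Finset.mem_univ i, rfl⟩,
        ck_adj_lr.2 rfl⟩
  · intro T hTS hT
    refine Finset.Subset.antisymm hTS ?_
    intro x hx
    obtain ⟨i, -, rfl⟩ := Finset.mem_image.1 hx
    rcases hT (Sum.inr i) with hmem | ⟨u, hu, hadj⟩
    · obtain ⟨j, -, hj⟩ := Finset.mem_image.1 (hTS hmem)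
      simp at hj
    · obtain ⟨j, -, rfl⟩ := Finset.mem_image.1 (hTS hu)
      have : j = i := ck_adj_lr.1 hadj
      rwa [this] at hu
  · rw [Finset.card_image_of_injective _ Sum.inl_injective, card_univ,
      Fintype.card_fin]

theorem upperGamma_CK (n : ℕ) : upperGammaNum (CK n) = n := by
  obtain ⟨hmin, hcard⟩ := ck_min_dom_exists n
  have hmem : n ∈ {k | ∃ S : Finset (Fin n ⊕ Fin n), MinDomSet (CK n) S ∧ S.card = k} :=
    ⟨_, hmin, hcard⟩
  have hbdd : ∀ k ∈ {k | ∃ S : Finset (Fin n ⊕ Fin n), MinDomSet (CK n) S ∧ S.card = k},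
      k ≤ n := by
    rintro k ⟨S, hS, rfl⟩
    exact ck_min_dom_card_le hS
  refine le_antisymm (csSup_le ⟨n, hmem⟩ hbdd) (le_csSup ⟨n, hbdd⟩ hmem)
end

section
/- Let F_n be the graph obtained from n disjoint edges by adding one universal vertex adjacent to all 2n endpoints. Then the open irredundance number OIR(F_n) equals n. -/
open Finset

variable {V : Type*}

/-- F_n: n disjoint edges x_i y_i plus a universal vertex c = `none`;
`some (i, b)` are the endpoints x_i (b = false) and y_i (b = true). -/
def Fgraph (n : ℕ) : SimpleGraph (Option (Fin n × Bool)) :=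
  SimpleGraph.fromRel (fun x y => match x, y with
    | none, some _ => True
    | some (i, _), some (j, _) => i = j
    | _, _ => False)

lemma fg_adj_none_some {n : ℕ} (p : Fin n × Bool) : (Fgraph n).Adj none (some p) := by
  simp [Fgraph, SimpleGraph.fromRel_adj]

lemma fg_adj_some_some {n : ℕ} {p q : Fin n × Bool} :
    (Fgraph n).Adj (some p) (some q) ↔ p ≠ q ∧ p.1 = q.1 := by
  obtain ⟨i, a⟩ := p; obtain ⟨j, b⟩ := q
  constructor
  · rintro ⟨hne, h | h⟩ <;>
    · simp only at h
      exact ⟨by simpa using hne, by simp [h]⟩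
  · rintro ⟨hne, h⟩
    exact ⟨by simpa using hne, Or.inl (by simpa using h)⟩

lemma fg_not_adj_none_none {n : ℕ} : ¬ (Fgraph n).Adj none none :=
  (Fgraph n).loopless.irrefl none

lemma fg_card_le {n : ℕ} (S : Finset (Option (Fin n × Bool)))
    (hS : IsOpenIrredSet (Fgraph n) S) : S.card ≤ n := by
  by_cases hc : (none : Option (Fin n × Bool)) ∈ S
  · -- S ⊆ {none}
    have hsub : S ⊆ {none} := by
      intro v hv
      simp only [Finset.mem_singleton]
      by_contra hvne
      obtain ⟨p, rfl⟩ := Option.ne_none_iff_exists'.mp hvne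
      obtain ⟨w, hwS, hwN, hpriv⟩ := hS (some p) hv
      have := hpriv none hc (by simp)
      rcases mem_closedNbhd.mp hwN with rfl | hadj
      · exact hwS hv
      · apply this
        rcases w with _ | q
        · exact mem_closedNbhd.mpr (Or.inl rfl)
        · exact mem_closedNbhd.mpr (Or.inr (fg_adj_none_some q))
    -- none needs a private neighbor, which must be some p, so n ≥ 1
    obtain ⟨w, hwS, hwN, _⟩ := hS none hc
    rcases w with _ | q
    · exact absurd hc hwS
    · calc S.card ≤ ({none} : Finset (Option (Fin n × Bool))).card :=
            Finset.card_le_card hsub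
        _ = 1 := Finset.card_singleton _
        _ ≤ n := Fin.pos q.1
  · -- none ∉ S : map to indices injectively
    rcases Finset.eq_empty_or_nonempty S with rfl | ⟨v0, hv0⟩
    · simp
    obtain ⟨p0, rfl⟩ := Option.ne_none_iff_exists'.mp (fun h => hc (h ▸ hv0))
    have : S.card ≤ (Finset.univ : Finset (Fin n)).card := by
      apply Finset.card_le_card_of_injOn (fun v => (v.getD p0).1)
      · intro _ _; exact Finset.mem_univ _
      · intro u hu v hv hf
        obtain ⟨p, rfl⟩ := Option.ne_none_iff_exists'.mp (fun h => hc (h ▸ hu))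
        obtain ⟨q, rfl⟩ := Option.ne_none_iff_exists'.mp (fun h => hc (h ▸ hv))
        simp only [Option.getD_some] at hf
        by_contra hne
        have hpq : p ≠ q := fun h => hne (by rw [h])
        obtain ⟨w, hwS, hwN, hpriv⟩ := hS (some p) hu
        have hw2 := hpriv (some q) hv (by simpa using hpq.symm)
        apply hw2
        rcases mem_closedNbhd.mp hwN with rfl | hadj
        · exact absurd hu hwS
        · rcases w with _ | r
          · exact mem_closedNbhd.mpr (Or.inr (fg_adj_none_some q).symm)
          · have hr : r.1 = p.1 := (fg_adj_some_some.mp hadj).2.symm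
            by_cases hrq : r = q
            · exact mem_closedNbhd.mpr (Or.inl (by rw [hrq]))
            · exact mem_closedNbhd.mpr (Or.inr (fg_adj_some_some.mpr
                ⟨fun h => hrq h.symm, by rw [← hf, ← hr]⟩))
    simpa using this

lemma fg_exists {n : ℕ} : ∃ S : Finset (Option (Fin n × Bool)),
    IsOpenIrredSet (Fgraph n) S ∧ S.card = n := by
  refine ⟨(Finset.univ : Finset (Fin n)).image (fun i => some (i, false)), ?_, ?_⟩
  · intro v hv
    simp only [Finset.mem_image, Finset.mem_univ, true_and] at hv
    obtain ⟨i, rfl⟩ := hv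
    refine ⟨some (i, true), ?_, ?_, ?_⟩
    · simp
    · exact mem_closedNbhd.mpr (Or.inr (fg_adj_some_some.mpr ⟨by simp, rfl⟩))
    · intro u hu hune hmem
      simp only [Finset.mem_image, Finset.mem_univ, true_and] at hu
      obtain ⟨j, rfl⟩ := hu
      have hij : j ≠ i := fun h => hune (by rw [h])
      rcases mem_closedNbhd.mp hmem with h | h
      · exact hij (by simpa using (congrArg (fun o => (o.getD (i, true)).1) h).symm)
      · exact hij (fg_adj_some_some.mp h).2
  · rw [Finset.card_image_of_injective _ (fun a b h => by simpa using h)]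
    simp

theorem OIR_Fgraph (n : ℕ) : OIRNum (Fgraph n) = n := by
  have hmem : n ∈ {k | ∃ S : Finset (Option (Fin n × Bool)),
      IsOpenIrredSet (Fgraph n) S ∧ S.card = k} := fg_exists
  have hbd : ∀ k ∈ {k | ∃ S : Finset (Option (Fin n × Bool)),
      IsOpenIrredSet (Fgraph n) S ∧ S.card = k}, k ≤ n := by
    rintro k ⟨S, hS, rfl⟩
    exact fg_card_le S hS
  exact le_antisymm (csSup_le ⟨n, hmem⟩ hbd) (le_csSup ⟨n, hbd⟩ hmem)
end

section
/- Let CK_n be two disjoint copies of K_n joined by a perfect matching. Then for every vertex v of CK_n, the maximum size of an irredundant set containing v equals n; hence the irredundance saturation number IRS(CK_n) = n. -/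
open Finset

variable {V : Type*}

lemma cn_ll (n : ℕ) (i ℓ : Fin n) : (Sum.inl ℓ : Fin n ⊕ Fin n) ∈ closedNbhd (CK n) (.inl i) := by
  rcases eq_or_ne ℓ i with h | h
  · exact Set.mem_insert_iff.2 (Or.inl (by rw [h]))
  · exact Set.mem_insert_iff.2 (Or.inr (by simp [CK, SimpleGraph.fromRel_adj, h.symm]))

lemma cn_rr (n : ℕ) (j m : Fin n) : (Sum.inr m : Fin n ⊕ Fin n) ∈ closedNbhd (CK n) (.inr j) := by
  rcases eq_or_ne m j with h | h
  · exact Set.mem_insert_iff.2 (Or.inl (by rw [h]))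
  · exact Set.mem_insert_iff.2 (Or.inr (by simp [CK, SimpleGraph.fromRel_adj, h.symm]))

lemma cn_rl (n : ℕ) (i m : Fin n) :
    (Sum.inr m : Fin n ⊕ Fin n) ∈ closedNbhd (CK n) (.inl i) ↔ m = i := by
  simp only [closedNbhd, Set.mem_insert_iff, SimpleGraph.mem_neighborSet]
  simp [CK, SimpleGraph.fromRel_adj, eq_comm]

lemma cn_lr (n : ℕ) (j ℓ : Fin n) :
    (Sum.inl ℓ : Fin n ⊕ Fin n) ∈ closedNbhd (CK n) (.inr j) ↔ ℓ = j := by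
  simp only [closedNbhd, Set.mem_insert_iff, SimpleGraph.mem_neighborSet]
  simp [CK, SimpleGraph.fromRel_adj, eq_comm]

lemma irredA (n : ℕ) : IsIrredSet (CK n) ((univ : Finset (Fin n)).image Sum.inl) := by
  intro v hv
  simp only [mem_image, mem_univ, true_and] at hv
  obtain ⟨i, rfl⟩ := hv
  refine ⟨.inr i, (cn_rl n i i).2 rfl, ?_⟩
  intro u hu hne
  simp only [mem_image, mem_univ, true_and] at hu
  obtain ⟨j, rfl⟩ := hu
  rw [cn_rl]
  exact fun h => hne (by rw [h])

lemma irredB (n : ℕ) : IsIrredSet (CK n) ((univ : Finset (Fin n)).image Sum.inr) := by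
  intro v hv
  simp only [mem_image, mem_univ, true_and] at hv
  obtain ⟨i, rfl⟩ := hv
  refine ⟨.inl i, (cn_lr n i i).2 rfl, ?_⟩
  intro u hu hne
  simp only [mem_image, mem_univ, true_and] at hu
  obtain ⟨j, rfl⟩ := hu
  rw [cn_lr]
  exact fun h => hne (by rw [h])

lemma card_le (n : ℕ) (S : Finset (Fin n ⊕ Fin n)) (hS : IsIrredSet (CK n) S) :
    S.card ≤ n := by
  by_cases hA : ∀ x ∈ S, ∃ i, x = Sum.inl i
  · calc S.card ≤ ((univ : Finset (Fin n)).image Sum.inl).card := by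
          apply card_le_card
          intro x hx
          obtain ⟨i, rfl⟩ := hA x hx
          simp
      _ ≤ n := by rw [card_image_of_injective _ Sum.inl_injective]; simp
  by_cases hB : ∀ x ∈ S, ∃ i, x = Sum.inr i
  · calc S.card ≤ ((univ : Finset (Fin n)).image Sum.inr).card := by
          apply card_le_card
          intro x hx
          obtain ⟨i, rfl⟩ := hB x hx
          simp
      _ ≤ n := by rw [card_image_of_injective _ Sum.inr_injective]; simp
  -- mixed case
  push_neg at hA hB
  obtain ⟨x, hx, hxr⟩ := hA
  obtain ⟨y, hy, hyl⟩ := hB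
  obtain ⟨j, rfl⟩ : ∃ j, x = Sum.inr j := by
    rcases x with i | j
    · exact absurd rfl (hxr i)
    · exact ⟨j, rfl⟩
  obtain ⟨i, rfl⟩ : ∃ i, y = Sum.inl i := by
    rcases y with i | j
    · exact ⟨i, rfl⟩
    · exact absurd rfl (hyl j)
  -- S ⊆ {inl i, inr j}
  have hsub : S ⊆ {Sum.inl i, Sum.inr j} := by
    intro z hz
    rcases z with ℓ | m
    · -- show ℓ = i; else a_i has no private neighbor
      simp only [mem_insert, mem_singleton]
      left
      by_contra hne
      obtain ⟨w, hw, hpriv⟩ := hS (Sum.inl i) hy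
      rcases w with wm | wr
      · exact hpriv (Sum.inl ℓ) hz (by simp [hne]) (cn_ll n ℓ wm)
      · rw [cn_rl] at hw
        exact hpriv (Sum.inr j) hx (by simp) (by rw [hw]; exact cn_rr n j i)
    · simp only [mem_insert, mem_singleton]
      right
      by_contra hne
      obtain ⟨w, hw, hpriv⟩ := hS (Sum.inr j) hx
      rcases w with wm | wr
      · rw [cn_lr] at hw
        exact hpriv (Sum.inl i) hy (by simp) (by rw [hw]; exact cn_ll n i j)
      · exact hpriv (Sum.inr m) hz (by simp [hne]) (cn_rr n m wr)
  have h2 : S.card ≤ 2 := (card_le_card hsub).trans ((card_insert_le _ _).trans (by simp))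
  rcases n with _ | _ | n
  · exact absurd i.2 (by omega)
  · -- n = 1 : contradiction
    exfalso
    obtain ⟨w, hw, hpriv⟩ := hS (Sum.inl i) hy
    rcases w with wm | wr
    · exact hpriv (Sum.inr j) hx (by simp) ((cn_lr _ j wm).2 (by rw [Fin.fin_one_eq_zero wm, Fin.fin_one_eq_zero j]))
    · exact hpriv (Sum.inr j) hx (by simp) (cn_rr _ j wr)
  · omega

theorem IRS_CK (n : ℕ) :
    (∀ v, IRSv (CK n) v = n) ∧ IRSNum (CK n) = n := by
  have key : ∀ v, IRSv (CK n) v = n := by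
    intro v
    have hmem : n ∈ {k | ∃ S : Finset (Fin n ⊕ Fin n),
        IsIrredSet (CK n) S ∧ v ∈ S ∧ S.card = k} := by
      rcases v with i | j
      · exact ⟨(univ : Finset (Fin n)).image Sum.inl, irredA n, by simp,
          by rw [card_image_of_injective _ Sum.inl_injective]; simp⟩
      · exact ⟨(univ : Finset (Fin n)).image Sum.inr, irredB n, by simp,
          by rw [card_image_of_injective _ Sum.inr_injective]; simp⟩
    have hbdd : BddAbove {k | ∃ S : Finset (Fin n ⊕ Fin n),
        IsIrredSet (CK n) S ∧ v ∈ S ∧ S.card = k} := by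
      refine ⟨n, fun k hk => ?_⟩
      obtain ⟨S, hS, _, hc⟩ := hk
      exact hc ▸ card_le n S hS
    refine le_antisymm (csSup_le ⟨n, hmem⟩ fun k hk => ?_) (le_csSup hbdd hmem)
    obtain ⟨S, hS, _, hc⟩ := hk
    exact hc ▸ card_le n S hS
  refine ⟨key, ?_⟩
  rcases n with _ | n
  · simp [IRSNum, iInf, Set.range_eq_empty, Nat.sInf_empty]
  · simp only [IRSNum, key]
    exact ciInf_const
end

section
/- Let BS_n^p (n ≥ 1, p ≥ 2) be the bistar-type graph obtained by joining the centers of two disjoint stars K_{1,n} by a path on p vertices (the two ends of the path being the centers). Then the independence saturation number IS(BS_n^p) is at least n+1. -/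
open Finset

variable {V : Type*}

/-- BS_n^p: two disjoint stars K_{1,n} whose centers are joined by a path on p vertices.
`inl i` (i : Fin p) are the path vertices c_1 … c_p, `inr (inl a)` are the n leaves
attached to c_1, and `inr (inr a)` are the n leaves attached to c_p. -/
def BS (n p : ℕ) : SimpleGraph (Fin p ⊕ (Fin n ⊕ Fin n)) :=
  SimpleGraph.fromRel (fun x y => match x, y with
    | .inl i, .inl j => i.val + 1 = j.val
    | .inl i, .inr (.inl _) => i.val = 0
    | .inl i, .inr (.inr _) => i.val = p - 1
    | _, _ => False)


section MyProof

variable (n p : ℕ)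

/-- Left leaves. -/
def leftF (n p : ℕ) : Finset (Fin p ⊕ (Fin n ⊕ Fin n)) :=
  (Finset.univ : Finset (Fin n)).image (fun a => Sum.inr (Sum.inl a))

/-- Right leaves. -/
def rightF (n p : ℕ) : Finset (Fin p ⊕ (Fin n ⊕ Fin n)) :=
  (Finset.univ : Finset (Fin n)).image (fun a => Sum.inr (Sum.inr a))

lemma indep_left (i : Fin p) (hi : i.val ≠ 0) :
    IsIndepSet (BS n p) (insert (Sum.inl i) (leftF n p)) := by
  intro u hu v hv
  simp only [leftF, Finset.mem_insert, Finset.mem_image, Finset.mem_univ, true_and] at hu hv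
  rcases hu with rfl | ⟨a, rfl⟩ <;> rcases hv with rfl | ⟨b, rfl⟩ <;>
    simp [BS, SimpleGraph.fromRel_adj, hi] <;> omega

lemma indep_right (hp : 2 ≤ p) (i : Fin p) (hi : i.val ≠ p - 1) :
    IsIndepSet (BS n p) (insert (Sum.inl i) (rightF n p)) := by
  intro u hu v hv
  simp only [rightF, Finset.mem_insert, Finset.mem_image, Finset.mem_univ, true_and] at hu hv
  rcases hu with rfl | ⟨a, rfl⟩ <;> rcases hv with rfl | ⟨b, rfl⟩ <;>
    simp [BS, SimpleGraph.fromRel_adj, hi] <;> omega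

lemma card_insert_left (i : Fin p) :
    (insert (Sum.inl i) (leftF n p)).card = n + 1 := by
  rw [Finset.card_insert_of_notMem (by simp [leftF])]
  rw [leftF, Finset.card_image_of_injective _ (fun a b h => by simpa using h)]
  simp

lemma card_insert_right (i : Fin p) :
    (insert (Sum.inl i) (rightF n p)).card = n + 1 := by
  rw [Finset.card_insert_of_notMem (by simp [rightF])]
  rw [rightF, Finset.card_image_of_injective _ (fun a b h => by simpa using h)]
  simp

lemma ISv_ge (G : SimpleGraph (Fin p ⊕ (Fin n ⊕ Fin n))) (v) (S : Finset _)
    (h1 : IsIndepSet G S) (h2 : v ∈ S) (h3 : S.card = n + 1) :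
    n + 1 ≤ ISv G v := by
  apply le_csSup
  · exact ⟨Fintype.card (Fin p ⊕ (Fin n ⊕ Fin n)),
      fun k ⟨T, _, _, hT⟩ => hT ▸ T.card_le_univ⟩
  · exact ⟨S, h1, h2, h3⟩

end MyProof

theorem IS_BS (n p : ℕ) (hn : 1 ≤ n) (hp : 2 ≤ p) :
    n + 1 ≤ ISNum (BS n p) := by
  have hNE : Nonempty (Fin p ⊕ (Fin n ⊕ Fin n)) := ⟨Sum.inl ⟨0, by omega⟩⟩
  unfold ISNum
  apply le_ciInf
  intro v
  match v with
  | Sum.inl i =>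
    by_cases hi : i.val = 0
    · exact ISv_ge n p _ _ _ (indep_right n p hp i (by omega))
        (Finset.mem_insert_self _ _) (card_insert_right n p i)
    · exact ISv_ge n p _ _ _ (indep_left n p i hi)
        (Finset.mem_insert_self _ _) (card_insert_left n p i)
  | Sum.inr (Sum.inl a) =>
    exact ISv_ge n p _ _ _ (indep_left n p ⟨p - 1, by omega⟩ (by simp; omega))
      (by simp [leftF]) (card_insert_left n p _)
  | Sum.inr (Sum.inr a) =>
    exact ISv_ge n p _ _ _ (indep_right n p hp ⟨0, by omega⟩ (by simp; omega))
      (by simp [rightF]) (card_insert_right n p _)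
end
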